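/- Let x > 1 be an irrational number with regular continued fraction expansion [a₀, a₁, a₂, ...], and suppose that for some n ≥ 1 we have 2 ≤ a_{n+1} ≤ aₙ + 1. Let p'/q' (in lowest terms, p', q' > 0) be the value of the finite continued fraction [a₀, a₁, ..., a_{n-1}, aₙ + 1]. Then |x - p'/q'| < x/(p' q'). -/

import Mathlib

/-- Partial quotients of the regular continued fraction of `x`:
`cfa x 0 = ⌊x⌋`, and `cfa x (n+1)` are the partial quotients of `1/(x - ⌊x⌋)`. -/
noncomputable def cfa (x : ℝ) : ℕ → ℤ
  | 0 => ⌊x⌋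
  | n + 1 => cfa (x - ⌊x⌋)⁻¹ n

/-- The value of a finite regular continued fraction `[a₀, a₁, …, aₖ]`. -/
noncomputable def cfVal : List ℝ → ℝ
  | [] => 0
  | a :: l => if l = [] then a else a + (cfVal l)⁻¹

/-- The `n`-th regular continued fraction convergent of `x`, i.e. the value of
`[a₀, a₁, …, aₙ]` where the `aᵢ` are the partial quotients of `x`. -/
noncomputable def cfConv (x : ℝ) (n : ℕ) : ℝ :=
  cfVal ((List.range (n + 1)).map fun i => ((cfa x i : ℤ) : ℝ))

/-- complete quotients -/
noncomputable def cq (x : ℝ) : ℕ → ℝ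
  | 0 => x
  | n + 1 => cq (x - ⌊x⌋)⁻¹ n

lemma cfa_eq_floor_cq (x : ℝ) (k : ℕ) : cfa x k = ⌊cq x k⌋ := by
  induction k generalizing x with
  | zero => rfl
  | succ k ih => simpa [cfa, cq] using ih ((x - ⌊x⌋)⁻¹)

lemma cq_succ (x : ℝ) (k : ℕ) : cq x (k+1) = (cq x k - ⌊cq x k⌋)⁻¹ := by
  induction k generalizing x with
  | zero => rfl
  | succ k ih => simpa [cq] using ih ((x - ⌊x⌋)⁻¹)

lemma cq_step {y : ℝ} (hy : Irrational y) :
    Irrational (y - ⌊y⌋)⁻¹ ∧ 1 < (y - ⌊y⌋)⁻¹ := by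
  have h0 : (0:ℝ) < y - ⌊y⌋ := by
    have := Int.floor_le y
    have hne : (⌊y⌋ : ℝ) ≠ y := (hy.ne_int ⌊y⌋).symm
    cases lt_or_eq_of_le this with
    | inl h => linarith
    | inr h => exact absurd h hne
  have h1 : y - ⌊y⌋ < 1 := by
    have := Int.lt_floor_add_one y; linarith
  refine ⟨?_, ?_⟩
  · exact (hy.sub_intCast ⌊y⌋).inv
  · rw [lt_inv_comm₀ one_pos h0] at *
    · linarith

lemma cq_irr_gt_one {x : ℝ} (hx : Irrational x) (hx1 : 1 < x) (k : ℕ) :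
    Irrational (cq x k) ∧ 1 < cq x k := by
  induction k with
  | zero => exact ⟨hx, hx1⟩
  | succ k ih =>
    rw [cq_succ]
    exact cq_step ih.1

lemma cq_rec {x : ℝ} (hx : Irrational x) (hx1 : 1 < x) (k : ℕ) :
    cq x k = (cfa x k : ℝ) + (cq x (k+1))⁻¹ := by
  have h := cq_succ x k
  have h1 : (1:ℝ) < cq x (k+1) := (cq_irr_gt_one hx hx1 (k+1)).2
  rw [cfa_eq_floor_cq, h, inv_inv]
  ring

/-- numerators of convergents; `pa a (k+1)` is the numerator of `[a 0; …; a k]`. -/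
def pa (a : ℕ → ℤ) : ℕ → ℤ
  | 0 => 1
  | 1 => a 0
  | (k+2) => a (k+1) * pa a (k+1) + pa a k

/-- denominators of convergents -/
def qa (a : ℕ → ℤ) : ℕ → ℤ
  | 0 => 0
  | 1 => 1
  | (k+2) => a (k+1) * qa a (k+1) + qa a k

lemma pa_pos (a : ℕ → ℤ) (ha : ∀ i, 1 ≤ a i) : ∀ k, 1 ≤ pa a k := by
  have key : ∀ k, 1 ≤ pa a k ∧ 1 ≤ pa a (k+1) := by
    intro k
    induction k with
    | zero => exact ⟨le_refl _, ha 0⟩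
    | succ k ih =>
      refine ⟨ih.2, ?_⟩
      show 1 ≤ a (k+1) * pa a (k+1) + pa a k
      nlinarith [ha (k+1), ih.1, ih.2]
  exact fun k => (key k).1

lemma qa_nonneg (a : ℕ → ℤ) (ha : ∀ i, 1 ≤ a i) : ∀ k, 0 ≤ qa a k := by
  have key : ∀ k, 0 ≤ qa a k ∧ 0 ≤ qa a (k+1) := by
    intro k
    induction k with
    | zero => exact ⟨le_refl _, zero_le_one⟩
    | succ k ih =>
      refine ⟨ih.2, ?_⟩
      show 0 ≤ a (k+1) * qa a (k+1) + qa a k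
      nlinarith [ha (k+1), ih.1, ih.2]
  exact fun k => (key k).1

lemma qa_pos (a : ℕ → ℤ) (ha : ∀ i, 1 ≤ a i) : ∀ k, 1 ≤ qa a (k+1) := by
  have key : ∀ k, 1 ≤ qa a (k+1) ∧ 1 ≤ qa a (k+2) := by
    intro k
    induction k with
    | zero =>
      constructor
      · exact le_refl _
      · show (1:ℤ) ≤ a 1 * 1 + 0
        nlinarith [ha 1]
    | succ k ih =>
      refine ⟨ih.2, ?_⟩
      show 1 ≤ a (k+2) * qa a (k+2) + qa a (k+1)
      nlinarith [ha (k+2), ih.1, ih.2]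
  exact fun k => (key k).1

lemma pa_qa_det (a : ℕ → ℤ) :
    ∀ k, pa a (k+1) * qa a k - pa a k * qa a (k+1) = (-1)^(k+1) := by
  intro k
  induction k with
  | zero => simp [pa, qa]
  | succ k ih =>
    have hp : pa a (k+2) = a (k+1) * pa a (k+1) + pa a k := rfl
    have hq : qa a (k+2) = a (k+1) * qa a (k+1) + qa a k := rfl
    rw [hp, hq, pow_succ]
    linear_combination (-1) * ih

lemma cfVal_append_pair (l : List ℝ) (b t : ℝ) :
    cfVal (l ++ [b, t]) = cfVal (l ++ [b + t⁻¹]) := by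
  induction l with
  | nil => simp [cfVal]
  | cons c l ih =>
    have h1 : (l ++ [b, t]) ≠ [] := by simp
    have h2 : (l ++ [b + t⁻¹]) ≠ [] := by simp
    show cfVal (c :: (l ++ [b, t])) = cfVal (c :: (l ++ [b + t⁻¹]))
    rw [cfVal, cfVal, if_neg h1, if_neg h2, ih]

lemma cfVal_formula (a : ℕ → ℤ) (ha : ∀ i, 1 ≤ a i) :
    ∀ m : ℕ, ∀ t : ℝ, 1 < t →
    cfVal (((List.range (m+1)).map fun i => ((a i : ℤ) : ℝ)) ++ [t])
      = (t * pa a (m+1) + pa a m) / (t * qa a (m+1) + qa a m) := by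
  intro m
  induction m with
  | zero =>
    intro t ht
    have ht0 : t ≠ 0 := by linarith
    show cfVal [((a 0 : ℤ) : ℝ), t] = _
    have : cfVal [((a 0 : ℤ) : ℝ), t] = (a 0 : ℝ) + (cfVal [t])⁻¹ := by
      rw [show [((a 0 : ℤ) : ℝ), t] = ((a 0:ℤ):ℝ) :: [t] from rfl, cfVal]
      simp
    rw [this]
    have : cfVal [t] = t := by rw [cfVal]; simp
    rw [this]
    show (a 0 : ℝ) + t⁻¹ = (t * pa a 1 + pa a 0) / (t * qa a 1 + qa a 0)
    have hp1 : pa a 1 = a 0 := rfl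
    have hp0 : pa a 0 = 1 := rfl
    have hq1 : qa a 1 = 1 := rfl
    have hq0 : qa a 0 = 0 := rfl
    rw [hp1, hp0, hq1, hq0]
    push_cast
    field_simp
    ring
  | succ m ih =>
    intro t ht
    have ht0 : (0:ℝ) < t := by linarith
    have hsplit : ((List.range (m+2)).map fun i => ((a i : ℤ) : ℝ)) ++ [t]
        = ((List.range (m+1)).map fun i => ((a i : ℤ) : ℝ)) ++ [((a (m+1) : ℤ) : ℝ), t] := by
      rw [List.range_succ, List.map_append]
      simp
    rw [hsplit, cfVal_append_pair]
    have ht' : 1 < ((a (m+1) : ℤ) : ℝ) + t⁻¹ := by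
      have h1 : (1:ℝ) ≤ ((a (m+1) : ℤ) : ℝ) := by exact_mod_cast ha (m+1)
      have : (0:ℝ) < t⁻¹ := by positivity
      linarith
    rw [ih _ ht']
    -- now algebra
    have hp : (pa a (m+2) : ℝ) = (a (m+1) : ℝ) * pa a (m+1) + pa a m := by
      rw [show pa a (m+2) = a (m+1) * pa a (m+1) + pa a m from rfl]; push_cast; ring
    have hq : (qa a (m+2) : ℝ) = (a (m+1) : ℝ) * qa a (m+1) + qa a m := by
      rw [show qa a (m+2) = a (m+1) * qa a (m+1) + qa a m from rfl]; push_cast; ring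
    have hqm1 : (1:ℝ) ≤ (qa a (m+1) : ℝ) := by exact_mod_cast qa_pos a ha m
    have hqm0 : (0:ℝ) ≤ (qa a m : ℝ) := by exact_mod_cast qa_nonneg a ha m
    have ha1 : (1:ℝ) ≤ ((a (m+1)) : ℝ) := by exact_mod_cast ha (m+1)
    have hd1 : (0:ℝ) < (((a (m+1) : ℤ) : ℝ) + t⁻¹) * qa a (m+1) + qa a m := by
      have : (0:ℝ) < t⁻¹ := by positivity
      nlinarith
    have hd2 : (0:ℝ) < t * (qa a (m+2)) + qa a (m+1) := by
      rw [hq]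
      have hpos : (0:ℝ) < (a (m+1) : ℝ) * qa a (m+1) + qa a m := by nlinarith
      nlinarith [mul_pos ht0 hpos]
    rw [div_eq_div_iff hd1.ne' hd2.ne', hp, hq]
    field_simp
    ring

lemma x_eq_cfVal {x : ℝ} (hx : Irrational x) (hx1 : 1 < x) :
    ∀ n : ℕ, x = cfVal (((List.range n).map fun i => ((cfa x i : ℤ) : ℝ)) ++ [cq x n]) := by
  intro n
  induction n with
  | zero => simp [cfVal, cq]
  | succ n ih =>
    have hsplit : ((List.range (n+1)).map fun i => ((cfa x i : ℤ) : ℝ)) ++ [cq x (n+1)]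
        = ((List.range n).map fun i => ((cfa x i : ℤ) : ℝ)) ++ [((cfa x n : ℤ) : ℝ), cq x (n+1)] := by
      rw [List.range_succ, List.map_append]
      simp
    rw [hsplit, cfVal_append_pair, ← cq_rec hx hx1 n]
    exact ih

set_option maxHeartbeats 1000000 in
theorem stmt_10 (x : ℝ) (hx : Irrational x) (hx1 : 1 < x) (n : ℕ) (hn : 1 ≤ n)
    (h1 : 2 ≤ cfa x (n + 1)) (h2 : cfa x (n + 1) ≤ cfa x n + 1)
    (p' q' : ℤ) (hp' : 0 < p') (hq' : 0 < q') (hcop : Int.gcd p' q' = 1)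
    (hval : (p' : ℝ) / q' =
      cfVal (((List.range n).map fun i => ((cfa x i : ℤ) : ℝ)) ++ [((cfa x n + 1 : ℤ) : ℝ)])) :
    |x - (p' : ℝ) / q'| < x / ((p' : ℝ) * q') := by
  obtain ⟨m, rfl⟩ : ∃ m, n = m + 1 := ⟨n - 1, (Nat.succ_pred_eq_of_pos hn).symm⟩
  set a : ℕ → ℤ := cfa x with ha_def
  have ha : ∀ i, 1 ≤ a i := by
    intro i
    have h := (cq_irr_gt_one hx hx1 i).2
    rw [ha_def, cfa_eq_floor_cq]
    exact Int.le_floor.2 (by exact_mod_cast h.le)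
  -- complete quotient
  set ξ : ℝ := cq x (m + 2) with hξ_def
  have hξirr : Irrational ξ := (cq_irr_gt_one hx hx1 (m+2)).1
  have hξ1 : 1 < ξ := (cq_irr_gt_one hx hx1 (m+2)).2
  have hfloor : a (m+2) = ⌊ξ⌋ := cfa_eq_floor_cq x (m+2)
  have hξlb : ((a (m+2) : ℤ) : ℝ) < ξ := by
    rw [hfloor]
    rcases lt_or_eq_of_le (Int.floor_le ξ) with h | h
    · exact h
    · exact absurd h (hξirr.ne_int ⌊ξ⌋).symm
  have hξub : ξ < ((a (m+2) : ℤ) : ℝ) + 1 := by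
    rw [hfloor]; exact Int.lt_floor_add_one ξ
  have hξ2 : 2 < ξ := by
    have : (2:ℝ) ≤ ((a (m+2) : ℤ) : ℝ) := by exact_mod_cast h1
    linarith
  -- integer convergent data
  set P : ℤ := pa a (m+2) with hP_def
  set P' : ℤ := pa a (m+1) with hP'_def
  set Q : ℤ := qa a (m+2) with hQ_def
  set Q' : ℤ := qa a (m+1) with hQ'_def
  have hPrec : P = a (m+1) * P' + pa a m := rfl
  have hQrec : Q = a (m+1) * Q' + qa a m := rfl
  have hdet : P * Q' - P' * Q = (-1)^(m+2) := pa_qa_det a (m+1)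
  have hP1 : 1 ≤ P := pa_pos a ha (m+2)
  have hP'1 : 1 ≤ P' := pa_pos a ha (m+1)
  have hPm1 : 1 ≤ pa a m := pa_pos a ha m
  have hQ1 : 1 ≤ Q := qa_pos a ha (m+1)
  have hQ'1 : 1 ≤ Q' := qa_pos a ha m
  -- x in terms of ξ
  have hx_eq : x = (ξ * P + P') / (ξ * Q + Q') := by
    have := x_eq_cfVal hx hx1 (m+2)
    rwa [cfVal_formula a ha (m+1) ξ hξ1] at this
  -- value of the modified convergent
  have hval2 : (p' : ℝ) / q' = ((P + P' : ℤ) : ℝ) / ((Q + Q' : ℤ) : ℝ) := by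
    rw [hval, cfVal_formula a ha m ((((a (m+1)) + 1 : ℤ)) : ℝ)
      (by have := ha (m+1); push_cast; exact_mod_cast by linarith : (1:ℝ) < (((a (m+1)) + 1 : ℤ) : ℝ))]
    have hnum : ((((a (m+1)) + 1 : ℤ)) : ℝ) * pa a (m+1) + pa a m = ((P + P' : ℤ) : ℝ) := by
      rw [hPrec]; push_cast; ring
    have hden : ((((a (m+1)) + 1 : ℤ)) : ℝ) * qa a (m+1) + qa a m = ((Q + Q' : ℤ) : ℝ) := by
      rw [hQrec]; push_cast; ring
    rw [hnum, hden]
  -- identify p', q'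
  have hq'R : (0:ℝ) < (q' : ℝ) := by exact_mod_cast hq'
  have hQQ' : (0:ℤ) < Q + Q' := by linarith
  have hPP' : (0:ℤ) < P + P' := by linarith
  have hQQ'R : (0:ℝ) < ((Q + Q' : ℤ) : ℝ) := by exact_mod_cast hQQ'
  have hcross : p' * (Q + Q') = (P + P') * q' := by
    have := (div_eq_div_iff hq'R.ne' hQQ'R.ne').1 hval2
    exact_mod_cast this
  have hcop1 : IsCoprime p' q' := Int.isCoprime_iff_gcd_eq_one.2 hcop
  have hcop2 : IsCoprime (P + P') (Q + Q') := by
    refine ⟨-(-1)^(m+2) * Q, (-1)^(m+2) * P, ?_⟩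
    have h4 : ((-1:ℤ))^(m+2) * ((-1:ℤ))^(m+2) = 1 := by
      rw [← pow_add]
      exact Even.neg_one_pow ⟨m+2, rfl⟩
    linear_combination ((-1:ℤ))^(m+2) * hdet + h4
  have hdvd1 : p' ∣ P + P' :=
    hcop1.dvd_of_dvd_mul_right ⟨Q + Q', hcross.symm⟩
  have hdvd2 : (P + P') ∣ p' :=
    hcop2.dvd_of_dvd_mul_right ⟨q', hcross⟩
  have hp'eq : p' = P + P' := Int.dvd_antisymm hp'.le hPP'.le hdvd1 hdvd2
  have hq'eq : q' = Q + Q' := by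
    have h5 : (P + P') * (Q + Q') = (P + P') * q' := by
      rw [← hcross, hp'eq]
    exact (mul_left_cancel₀ (by linarith) h5).symm
  -- pass to reals
  have hp'R : (p' : ℝ) = (P : ℝ) + P' := by rw [hp'eq]; push_cast; ring
  have hq'Re : (q' : ℝ) = (Q : ℝ) + Q' := by rw [hq'eq]; push_cast; ring
  rw [hp'R, hq'Re]
  have hPR : (1:ℝ) ≤ (P:ℝ) := by exact_mod_cast hP1
  have hP'R : (1:ℝ) ≤ (P':ℝ) := by exact_mod_cast hP'1
  have hQR : (1:ℝ) ≤ (Q:ℝ) := by exact_mod_cast hQ1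
  have hQ'R : (1:ℝ) ≤ (Q':ℝ) := by exact_mod_cast hQ'1
  have hPmR : (1:ℝ) ≤ ((pa a m : ℤ):ℝ) := by exact_mod_cast hPm1
  have hA : (0:ℝ) < ξ * Q + Q' := by nlinarith
  have hB : (0:ℝ) < (Q:ℝ) + Q' := by linarith
  have hC : (0:ℝ) < (P:ℝ) + P' := by linarith
  have hdetR : (P:ℝ) * Q' - (P':ℝ) * Q = (-1:ℝ)^(m+2) := by exact_mod_cast hdet
  have key : x - ((P:ℝ) + P')/((Q:ℝ) + Q')
      = ((ξ - 1) * (-1:ℝ)^(m+2)) / ((ξ * Q + Q') * ((Q:ℝ) + Q')) := by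
    rw [hx_eq, div_sub_div _ _ hA.ne' hB.ne']
    congr 1
    linear_combination (ξ - 1) * hdetR
  have habs : |x - ((P:ℝ) + P')/((Q:ℝ) + Q')|
      = (ξ - 1) / ((ξ * Q + Q') * ((Q:ℝ) + Q')) := by
    rw [key, abs_div, abs_of_pos (by positivity : (0:ℝ) < (ξ * Q + Q') * ((Q:ℝ) + Q')),
      abs_mul, abs_pow, abs_neg, abs_one, one_pow, mul_one,
      abs_of_pos (by linarith : (0:ℝ) < ξ - 1)]
  rw [habs]
  have hram : ξ < ((a (m+1) : ℤ):ℝ) + 2 := by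
    have : ((a (m+2) : ℤ):ℝ) ≤ ((a (m+1):ℤ):ℝ) + 1 := by exact_mod_cast h2
    linarith
  have hPRrec : (P:ℝ) = ((a (m+1):ℤ):ℝ) * P' + ((pa a m : ℤ):ℝ) := by exact_mod_cast hPrec
  have hstep : (ξ - 1) * ((P:ℝ) + P') < ξ * P + P' := by
    nlinarith [mul_lt_mul_of_pos_right hram (by linarith : (0:ℝ) < (P':ℝ))]
  rw [hx_eq, div_div]
  rw [div_lt_div_iff₀ (by positivity) (by positivity)]
  nlinarith [mul_lt_mul_of_pos_right hstep (mul_pos hA hB)]
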